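/- arXiv:0710.4589 — 3 statements merged into one kernel-verified Lean document; each statement's English description precedes it below -/
import Mathlib

section
/- Let X be a self-avoiding cutset of edges in Z^d separating a finite connected set B from infinity. Then for every edge e ∈ X with endpoints v₁ and v₂ (labelled appropriately), there exist paths γ₁ from v₁ to B and γ₂ from v₂ to infinity (i.e., γ₂ leaves every finite set) such that neither γ₁ nor γ₂ uses any edge of X. -/
/-- The nearest-neighbor graph on `ℤ^d`. -/
def latticeGraph (d : ℕ) : SimpleGraph (Fin d → ℤ) where
  Adj u v := (∑ i, (u i - v i).natAbs) = 1
  symm := by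
    constructor
    intro u v h
    rw [Finset.sum_congr rfl (fun i _ => by rw [← Int.natAbs_neg, neg_sub] : ∀ i ∈ Finset.univ, (v i - u i).natAbs = (u i - v i).natAbs)]
    exact h
  loopless := by constructor; intro u h; simp at h

/-- `X` cuts the set `B` from infinity: every infinite nearest-neighbor path which
starts in `B` and eventually leaves every finite set must use an edge of `X`. -/
def CutsFromInfinity (d : ℕ) (B : Set (Fin d → ℤ)) (X : Set (Sym2 (Fin d → ℤ))) : Prop :=
  ∀ γ : ℕ → (Fin d → ℤ), γ 0 ∈ B →
    (∀ n, (latticeGraph d).Adj (γ n) (γ (n + 1))) →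
    (∀ S : Set (Fin d → ℤ), S.Finite → ∃ n, γ n ∉ S) →
    ∃ n, s(γ n, γ (n + 1)) ∈ X

namespace CutsetAux

def avoidGraph (d : ℕ) (X : Set (Sym2 (Fin d → ℤ))) : SimpleGraph (Fin d → ℤ) where
  Adj u v := (latticeGraph d).Adj u v ∧ s(u, v) ∉ X
  symm := ⟨fun u v ⟨h1, h2⟩ => ⟨h1.symm, by rwa [Sym2.eq_swap]⟩⟩
  loopless := ⟨fun u ⟨h1, _⟩ => (latticeGraph d).irrefl h1⟩

variable {d : ℕ} {X : Set (Sym2 (Fin d → ℤ))}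

lemma avoid_le : avoidGraph d X ≤ latticeGraph d := fun _ _ h => h.1

lemma avoid_edge_not_mem {e : Sym2 (Fin d → ℤ)} (he : e ∈ (avoidGraph d X).edgeSet) : e ∉ X := by
  induction e using Sym2.ind with
  | _ x y => exact ((SimpleGraph.mem_edgeSet _).mp he).2

lemma reach_seg (γ : ℕ → (Fin d → ℤ)) (hadj : ∀ n, (latticeGraph d).Adj (γ n) (γ (n+1)))
    (n : ℕ) (h : ∀ i < n, s(γ i, γ (i+1)) ∉ X) : (avoidGraph d X).Reachable (γ 0) (γ n) := by
  induction n with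
  | zero => exact SimpleGraph.Reachable.refl _
  | succ n ih =>
    exact (ih (fun i hi => h i (Nat.lt_succ_of_lt hi))).trans
      (SimpleGraph.Adj.reachable ⟨hadj n, h n (Nat.lt_succ_self n)⟩)

lemma reach_to_walk {u v : Fin d → ℤ} (h : (avoidGraph d X).Reachable u v) :
    ∃ w : (latticeGraph d).Walk u v, ∀ e' ∈ w.edges, e' ∉ X := by
  obtain ⟨p⟩ := h
  refine ⟨p.transfer (latticeGraph d) (fun e he => ?_), fun e' he' => ?_⟩
  · exact SimpleGraph.edgeSet_mono avoid_le (p.edges_subset_edgeSet he)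
  · rw [SimpleGraph.Walk.edges_transfer] at he'
    exact avoid_edge_not_mem (p.edges_subset_edgeSet he')

lemma boxSet_finite (d k : ℕ) : {v : Fin d → ℤ | ∀ i, (v i).natAbs ≤ k}.Finite := by
  apply Set.Finite.subset (Set.Finite.pi (fun i : Fin d => Set.finite_Icc (-(k:ℤ)) (k:ℤ)))
  intro v hv i _
  have := hv i
  simp only [Set.mem_Icc]
  omega

lemma finite_subset_box {S : Set (Fin d → ℤ)} (hS : S.Finite) :
    ∃ k : ℕ, ∀ v ∈ S, ∀ i, (v i).natAbs ≤ k := by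
  classical
  refine ⟨hS.toFinset.sup (fun v => Finset.univ.sup (fun i => (v i).natAbs)), fun v hv i => ?_⟩
  calc (v i).natAbs ≤ Finset.univ.sup (fun i => (v i).natAbs) := Finset.le_sup (f := fun j => (v j).natAbs) (Finset.mem_univ i)
    _ ≤ _ := Finset.le_sup (f := fun v => Finset.univ.sup (fun i => (v i).natAbs)) (hS.mem_toFinset.mpr hv)


open SimpleGraph in
lemma exists_escape (b : Fin d → ℤ)
    (h : {v | (avoidGraph d X).Reachable b v}.Infinite) :
    ∃ γ₂ : ℕ → (Fin d → ℤ), γ₂ 0 = b ∧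
      (∀ n, (latticeGraph d).Adj (γ₂ n) (γ₂ (n + 1))) ∧
      (∀ S : Set (Fin d → ℤ), S.Finite → ∃ n, γ₂ n ∉ S) ∧
      ∀ n, s(γ₂ n, γ₂ (n + 1)) ∉ X := by
  classical
  set G := avoidGraph d X with hG
  -- choose far-away vertices in the component
  have hw : ∀ k : ℕ, ∃ v, G.Reachable b v ∧ ¬(∀ i, (v i).natAbs ≤ k) ∧ v ≠ b := by
    intro k
    have hfin : ({v : Fin d → ℤ | ∀ i, (v i).natAbs ≤ k} ∪ {b}).Finite :=
      (boxSet_finite d k).union (Set.finite_singleton b)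
    obtain ⟨v, hv1, hv2⟩ := (h.diff hfin).nonempty
    refine ⟨v, hv1, ?_, ?_⟩
    · exact fun hbox => hv2 (Or.inl hbox)
    · exact fun hb => hv2 (Or.inr hb)
  choose w hw1 hw2 hw3 using hw
  have hpw : ∀ k, G.Walk b (w k) := fun k => Classical.choice (hw1 k)
  set p : ∀ k, G.Walk b (w k) := hpw with hp
  set q : ℕ → G.Walk b b := fun k => (p k).append (p k).reverse with hq
  have hplen : ∀ k, 1 ≤ (p k).length := by
    intro k
    by_contra hc
    push_neg at hc
    exact hw3 k ((p k).eq_of_length_eq_zero (by omega)).symm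
  have hqlen : ∀ k, 2 ≤ (q k).length := by
    intro k
    rw [hq]
    simp only [Walk.length_append, Walk.length_reverse]
    have := hplen k; omega
  set W : ℕ → G.Walk b b := fun k => Nat.rec (q 0) (fun k Wk => Wk.append (q (k+1))) k with hW
  have hWsucc : ∀ k, W (k+1) = (W k).append (q (k+1)) := fun k => rfl
  have hWlen : ∀ k, 2 * (k + 1) ≤ (W k).length := by
    intro k
    induction k with
    | zero => exact hqlen 0
    | succ k ih =>
      rw [hWsucc, Walk.length_append]
      have := hqlen (k+1); omega
  have hWmono : ∀ k m, k ≤ m → (W k).length ≤ (W m).length := by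
    intro k m hkm
    induction m with
    | zero =>
      have : k = 0 := Nat.le_zero.mp hkm
      subst this; exact le_rfl
    | succ m ih =>
      rcases Nat.lt_or_ge k (m+1) with hlt | hge
      · have := ih (by omega)
        rw [hWsucc, Walk.length_append]; omega
      · have : k = m + 1 := by omega
        subst this; rfl
  have hstab : ∀ k m, k ≤ m → ∀ i, i ≤ (W k).length → (W m).getVert i = (W k).getVert i := by
    intro k m hkm
    induction m with
    | zero =>
      have : k = 0 := by omega
      subst this; intro i _; rfl
    | succ m ih =>
      intro i hi
      rcases Nat.lt_or_ge k (m+1) with hlt | hge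
      · have hile : i ≤ (W m).length := le_trans hi (hWmono k m (by omega))
        rw [hWsucc, Walk.getVert_append]
        split
        · exact ih (by omega) i hi
        · have hkm' : (W k).length ≤ (W m).length := hWmono k m (by omega)
          have h0 : i - (W m).length = 0 := by omega
          have hikk : i = (W k).length := by omega
          rw [h0, Walk.getVert_zero, hikk, Walk.getVert_length]
      · have : k = m + 1 := by omega
        subst this; rfl
  refine ⟨fun n => (W n).getVert n, Walk.getVert_zero _, ?_, ?_, ?_⟩
  case _ =>
    -- adjacency
    have key : ∀ n, G.Adj ((W n).getVert n) ((W (n+1)).getVert (n+1)) := by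
      intro n
      have h1 : (W (n+1)).getVert n = (W n).getVert n :=
        hstab n (n+1) (by omega) n (le_trans (by omega) (hWlen n))
      rw [← h1]
      exact Walk.adj_getVert_succ _ (by have := hWlen (n+1); omega)
    exact fun n => (key n).1
  case _ =>
    -- escape
    intro S hS
    obtain ⟨K, hK⟩ := finite_subset_box hS
    obtain ⟨i, hi⟩ : ∃ i, i = (W K).length + (p (K+1)).length := ⟨_, rfl⟩
    have hik : K + 1 ≤ i := by have := hWlen K; have := hplen (K+1); omega
    have hilen : i ≤ (W (K+1)).length := by
      rw [hWsucc, Walk.length_append, hq]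
      simp only [Walk.length_append, Walk.length_reverse]
      omega
    have hval : (W (K+1)).getVert i = w (K+1) := by
      rw [hWsucc, Walk.getVert_append]
      rw [if_neg (by omega)]
      have h2 : i - (W K).length = (p (K+1)).length := by omega
      rw [h2, hq]
      rw [Walk.getVert_append, if_neg (by omega), Nat.sub_self, Walk.getVert_zero]
    refine ⟨i, ?_⟩
    show (W i).getVert i ∉ S
    rw [hstab (K+1) i hik i hilen, hval]
    intro hmem
    exact hw2 (K+1) (fun j => le_trans (hK _ hmem j) (by omega))
  case _ =>
    -- edges not in X
    intro n
    have h1 : (W (n+1)).getVert n = (W n).getVert n :=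
      hstab n (n+1) (by omega) n (le_trans (by omega) (hWlen n))
    have := Walk.adj_getVert_succ (W (n+1)) (i := n) (by have := hWlen (n+1); omega)
    rw [h1] at this
    exact this.2

end CutsetAux

open CutsetAux

/-- if `X` is a self-avoiding (minimal) cutset of edges separating a finite
connected set `B ⊂ ℤ^d` from infinity, then for every edge `e ∈ X` with endpoints
`v₁, v₂` (suitably labelled) there are a path `γ₁` from `v₁` to `B` and an infinite
path `γ₂` from `v₂` escaping every finite set, neither of which uses any edge of `X`. -/
theorem self_avoiding_cutset_edge_paths (d : ℕ) (B : Set (Fin d → ℤ))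
    (hBfin : B.Finite)
    (hBconn : ∀ x ∈ B, ∀ y ∈ B, ∃ p : (latticeGraph d).Walk x y,
      ∀ z ∈ p.support, z ∈ B)
    (X : Set (Sym2 (Fin d → ℤ)))
    (hX : ∀ e ∈ X, e ∈ (latticeGraph d).edgeSet)
    (hcut : CutsFromInfinity d B X)
    (hmin : ∀ e ∈ X, ¬ CutsFromInfinity d B (X \ {e})) :
    ∀ e ∈ X, ∃ v₁ v₂ : Fin d → ℤ, e = s(v₁, v₂) ∧
      (∃ b ∈ B, ∃ γ₁ : (latticeGraph d).Walk v₁ b, ∀ e' ∈ γ₁.edges, e' ∉ X) ∧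
      (∃ γ₂ : ℕ → (Fin d → ℤ), γ₂ 0 = v₂ ∧
        (∀ n, (latticeGraph d).Adj (γ₂ n) (γ₂ (n + 1))) ∧
        (∀ S : Set (Fin d → ℤ), S.Finite → ∃ n, γ₂ n ∉ S) ∧
        ∀ n, s(γ₂ n, γ₂ (n + 1)) ∉ X) := by
  classical
  intro e he
  have hne := hmin e he
  rw [CutsFromInfinity] at hne
  push_neg at hne
  obtain ⟨γ, hγB, hγadj, hγesc, hγavoid⟩ := hne
  set G := avoidGraph d X with hGdef
  have hedge_e : ∀ m, s(γ m, γ (m+1)) ∈ X → s(γ m, γ (m+1)) = e := by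
    intro m hm
    by_contra hc
    exact hγavoid m ⟨hm, hc⟩
  have hexX : ∃ m, s(γ m, γ (m+1)) ∈ X := hcut γ hγB hγadj hγesc
  obtain ⟨n0, hn0X, hn0min⟩ : ∃ n0, s(γ n0, γ (n0+1)) ∈ X ∧ ∀ i < n0, s(γ i, γ (i+1)) ∉ X :=
    ⟨Nat.find hexX, Nat.find_spec hexX, fun i hi => Nat.find_min hexX hi⟩
  have heq : e = s(γ n0, γ (n0 + 1)) := (hedge_e n0 hn0X).symm
  have hRa0 : G.Reachable (γ n0) (γ 0) := (reach_seg γ hγadj n0 hn0min).symm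
  -- invariant
  have hinv : ∀ m, G.Reachable (γ n0) (γ m) ∨ G.Reachable (γ (n0+1)) (γ m) := by
    intro m
    induction m with
    | zero => exact Or.inl hRa0
    | succ m ih =>
      by_cases hX' : s(γ m, γ (m+1)) ∈ X
      · have hme : s(γ m, γ (m+1)) = s(γ n0, γ (n0+1)) := (hedge_e m hX').trans heq
        rw [Sym2.eq_iff] at hme
        rcases hme with ⟨h1, h2⟩ | ⟨h1, h2⟩
        · exact Or.inr (h2 ▸ SimpleGraph.Reachable.refl _)
        · exact Or.inl (h2 ▸ SimpleGraph.Reachable.refl _)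
      · have hadj : G.Adj (γ m) (γ (m+1)) := ⟨hγadj m, hX'⟩
        rcases ih with h | h
        · exact Or.inl (h.trans hadj.reachable)
        · exact Or.inr (h.trans hadj.reachable)
  -- component of γ (n0+1) is infinite
  have hcompb : {v | G.Reachable (γ (n0+1)) v}.Infinite := by
    by_contra hcf
    rw [Set.not_infinite] at hcf
    by_cases hab : G.Reachable (γ n0) (γ (n0+1))
    · obtain ⟨m, hm⟩ := hγesc {v | G.Reachable (γ (n0+1)) v} hcf
      exact hm (by rcases hinv m with h | h; exacts [hab.symm.trans h, h])
    · -- splice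
      have hexj : ∀ pn : ℕ, ∃ j, pn < j ∧ G.Reachable (γ n0) (γ j) ∧ γ j ≠ γ pn := by
        intro pn
        have hfin : ({v | G.Reachable (γ (n0+1)) v} ∪ (γ '' {i | i ≤ pn})).Finite :=
          hcf.union ((Set.finite_le_nat pn).image γ)
        obtain ⟨j, hj⟩ := hγesc _ hfin
        have hQj : G.Reachable (γ n0) (γ j) := by
          rcases hinv j with h | h
          · exact h
          · exact absurd (Or.inl h) hj
        have hjgt : pn < j := by
          by_contra hc
          push_neg at hc
          exact hj (Or.inr ⟨j, hc, rfl⟩)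
        refine ⟨j, hjgt, hQj, fun hc => ?_⟩
        exact hj (Or.inr ⟨pn, le_refl pn, hc.symm⟩)
      set ν : ℕ → ℕ := fun k => Nat.rec 0 (fun _ prev => Nat.find (hexj prev)) k with hν
      have hνsucc : ∀ k, ν (k+1) = Nat.find (hexj (ν k)) := fun k => rfl
      have hνspec : ∀ k, ν k < ν (k+1) ∧ G.Reachable (γ n0) (γ (ν (k+1))) ∧ γ (ν (k+1)) ≠ γ (ν k) :=
        fun k => Nat.find_spec (hexj (ν k))
      have hQν : ∀ k, G.Reachable (γ n0) (γ (ν k)) := by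
        intro k
        cases k with
        | zero => exact hRa0.symm.symm |>.trans (SimpleGraph.Reachable.refl _) |>.symm.symm
        | succ k => exact (hνspec k).2.1
      have hconst : ∀ k j, ν k ≤ j → j < ν (k+1) → G.Reachable (γ n0) (γ j) → γ j = γ (ν k) := by
        intro k j h1 h2 hQ
        rcases Nat.eq_or_lt_of_le h1 with h | h
        · rw [← h]
        · by_contra hc
          exact Nat.find_min (hexj (ν k)) (hνsucc k ▸ h2) ⟨h, hQ, hc⟩
      have hδadj : ∀ k, (latticeGraph d).Adj (γ (ν k)) (γ (ν (k+1))) ∧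
          s(γ (ν k), γ (ν (k+1))) ∉ X := by
        intro k
        obtain ⟨hlt, hQm, hne'⟩ := hνspec k
        have hm1 : ν k ≤ ν (k+1) - 1 := by omega
        have hm1s : ν (k+1) - 1 + 1 = ν (k+1) := by omega
        by_cases hQ : G.Reachable (γ n0) (γ (ν (k+1) - 1))
        · have hceq : γ (ν (k+1) - 1) = γ (ν k) := hconst k _ hm1 (by omega) hQ
          have hedge : s(γ (ν (k+1) - 1), γ (ν (k+1))) ∉ X := by
            intro hXe
            have hme : s(γ (ν (k+1) - 1), γ (ν (k+1))) = s(γ n0, γ (n0+1)) := by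
              have := hedge_e (ν (k+1) - 1)
              rw [hm1s] at this
              exact (this hXe).trans heq
            rw [Sym2.eq_iff] at hme
            rcases hme with ⟨h1, h2⟩ | ⟨h1, h2⟩
            · exact hab (h2 ▸ hQm)
            · exact hab (h1 ▸ hQ)
          have hla := hγadj (ν (k+1) - 1)
          rw [hm1s] at hla
          rw [← hceq]
          exact ⟨hla, hedge⟩
        · exfalso
          have hm2 : ν k + 2 ≤ ν (k+1) := by
            rcases Nat.lt_or_ge (ν k + 1) (ν (k+1)) with h | h
            · omega
            · exfalso
              have : ν (k+1) - 1 = ν k := by omega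
              exact hQ (this ▸ hQν k)
          -- find switch point
          have hswex : ∃ s, ¬ G.Reachable (γ n0) (γ (ν k + s + 1)) := by
            refine ⟨ν (k+1) - ν k - 2, ?_⟩
            rw [show ν k + (ν (k+1) - ν k - 2) + 1 = ν (k+1) - 1 by omega]
            exact hQ
          set s0 := Nat.find hswex with hs0
          have hnQt1 : ¬ G.Reachable (γ n0) (γ (ν k + s0 + 1)) := Nat.find_spec hswex
          have hs0le : s0 ≤ ν (k+1) - ν k - 2 := Nat.find_min' hswex (by
            rw [show ν k + (ν (k+1) - ν k - 2) + 1 = ν (k+1) - 1 by omega]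
            exact hQ)
          have hQt : G.Reachable (γ n0) (γ (ν k + s0)) := by
            cases hs0c : s0 with
            | zero => simpa using hQν k
            | succ s1 =>
              have h2 := Nat.find_min hswex (by omega : s1 < s0)
              rw [not_not] at h2
              rw [← Nat.add_assoc]
              exact h2
          -- edge at t crosses, must be e
          have hXt : s(γ (ν k + s0), γ (ν k + s0 + 1)) ∈ X := by
            by_contra hc
            exact hnQt1 (hQt.trans (SimpleGraph.Adj.reachable ⟨hγadj _, hc⟩))
          have hmt : s(γ (ν k + s0), γ (ν k + s0 + 1)) = s(γ n0, γ (n0+1)) :=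
            (hedge_e _ hXt).trans heq
          rw [Sym2.eq_iff] at hmt
          have hta : γ (ν k + s0) = γ n0 := by
            rcases hmt with ⟨h1, h2⟩ | ⟨h1, h2⟩
            · exact h1
            · exact absurd (h1 ▸ hQt) hab
          have hνka : γ (ν k) = γ n0 := by
            have := hconst k (ν k + s0) (by omega) (by omega) hQt
            rw [← this, hta]
          -- edge at ν(k+1)-1 crosses, must be e
          have hXm : s(γ (ν (k+1) - 1), γ (ν (k+1))) ∈ X := by
            by_contra hc
            have hadj2 : G.Adj (γ (ν (k+1) - 1)) (γ (ν (k+1))) := by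
              constructor
              · have := hγadj (ν (k+1) - 1); rwa [hm1s] at this
              · exact hc
            exact hQ (hQm.trans hadj2.symm.reachable)
          have hmm : s(γ (ν (k+1) - 1), γ (ν (k+1))) = s(γ n0, γ (n0+1)) := by
            have := hedge_e (ν (k+1) - 1)
            rw [hm1s] at this
            exact (this hXm).trans heq
          rw [Sym2.eq_iff] at hmm
          rcases hmm with ⟨h1, h2⟩ | ⟨h1, h2⟩
          · exact hQ (h1 ▸ SimpleGraph.Reachable.refl _)
          · exact hne' (h2.trans hνka.symm)
      -- the spliced path contradicts hcut
      have hδB : γ (ν 0) ∈ B := hγB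
      have hδesc : ∀ S : Set (Fin d → ℤ), S.Finite → ∃ k, γ (ν k) ∉ S := by
        intro S hS
        obtain ⟨j, hj⟩ := hγesc (S ∪ {v | G.Reachable (γ (n0+1)) v}) (hS.union hcf)
        have hQj : G.Reachable (γ n0) (γ j) := by
          rcases hinv j with h | h
          · exact h
          · exact absurd (Or.inr h) hj
        have hmono : StrictMono ν := strictMono_nat_of_lt_succ (fun k => (hνspec k).1)
        have hkex : ∃ k, j < ν (k+1) := ⟨j, lt_of_lt_of_le (Nat.lt_succ_self j) hmono.le_apply⟩
        obtain ⟨k, hk1, hk2⟩ : ∃ k, ν k ≤ j ∧ j < ν (k+1) := by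
          refine ⟨Nat.find hkex, ?_, Nat.find_spec hkex⟩
          cases hkc : Nat.find hkex with
          | zero => exact Nat.zero_le j
          | succ k1 =>
            have h3 := Nat.find_min hkex (by omega : k1 < Nat.find hkex)
            omega
        have := hconst k j hk1 hk2 hQj
        refine ⟨k, ?_⟩
        rw [← this]
        exact fun hc => hj (Or.inl hc)
      obtain ⟨k, hk⟩ := hcut (fun k => γ (ν k)) hδB (fun k => (hδadj k).1) hδesc
      exact (hδadj k).2 hk
  -- assemble
  refine ⟨γ n0, γ (n0+1), heq, ?_, ?_⟩
  · obtain ⟨w, hw⟩ := reach_to_walk hRa0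
    exact ⟨γ 0, hγB, w, hw⟩
  · exact exists_escape (γ (n0+1)) hcompb
end

section
/- Let ω be an assignment of labels 'open' or 'closed' to the edges of Z^d, and let B be a finite connected subgraph all of whose edges are open. Let C be the open cluster of B (all vertices joined to B by open paths), and suppose C is finite. Then the set Δ_e C of exterior boundary edges of C—edges e not in C, adjacent to C, whose far endpoint has a path to infinity avoiding all vertices of C—consists entirely of closed edges and is a cutset separating B from infinity: every infinite path from B uses an edge of Δ_e C. -/
/-- The open cluster of a set `B`: vertices joined to `B` by a walk all of whose
edges are open (`ω e` holds). -/
def openCluster (d : ℕ) (ω : Sym2 (Fin d → ℤ) → Prop) (B : Set (Fin d → ℤ)) :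
    Set (Fin d → ℤ) :=
  {v | ∃ b ∈ B, ∃ p : (latticeGraph d).Walk b v, ∀ e ∈ p.edges, ω e}

/-- The exterior boundary edges of the open cluster `C` of `B`: edges `s(a,b)` of the
lattice with `a ∈ C`, `b ∉ C`, whose far endpoint `b` admits an infinite path to
infinity avoiding all vertices of `C`. -/
def extBoundaryEdges (d : ℕ) (C : Set (Fin d → ℤ)) : Set (Sym2 (Fin d → ℤ)) :=
  {e | ∃ a b : Fin d → ℤ, e = s(a, b) ∧ (latticeGraph d).Adj a b ∧ a ∈ C ∧ b ∉ C ∧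
    ∃ γ : ℕ → (Fin d → ℤ), γ 0 = b ∧
      (∀ n, (latticeGraph d).Adj (γ n) (γ (n + 1))) ∧
      (∀ S : Set (Fin d → ℤ), S.Finite → ∃ n, γ n ∉ S) ∧
      ∀ n, γ n ∉ C}

open SimpleGraph

/- ### Auxiliary lemmas -/

lemma pf_getVert_mem_support {V : Type*} {G : SimpleGraph V} {u v : V}
    (p : G.Walk u v) (i : ℕ) : p.getVert i ∈ p.support := by
  induction p generalizing i with
  | nil => simp [Walk.getVert]
  | cons h p ih =>
    cases i with
    | zero => simp [Walk.getVert]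
    | succ n => simp only [Walk.getVert_cons_succ, Walk.support_cons, List.mem_cons]
                exact Or.inr (ih n)

lemma pf_nbr_finite {d : ℕ} (a : Fin d → ℤ) : {v | (latticeGraph d).Adj a v}.Finite := by
  apply Set.Finite.subset
    (Set.Finite.pi (fun i : Fin d => Set.finite_Icc (a i - 1) (a i + 1)))
  intro v hv
  have hsum : (∑ i, (a i - v i).natAbs) = 1 := hv
  intro i _
  have h1 : (a i - v i).natAbs ≤ 1 := by
    calc (a i - v i).natAbs ≤ ∑ j, (a j - v j).natAbs :=
          Finset.single_le_sum (f := fun j => (a j - v j).natAbs)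
            (fun _ _ => Nat.zero_le _) (Finset.mem_univ i)
      _ = 1 := hsum
  constructor <;> omega

lemma pf_box_finite {d : ℕ} (k : ℕ) :
    {v : Fin d → ℤ | ∀ i, (v i).natAbs ≤ k}.Finite := by
  apply Set.Finite.subset
    (Set.Finite.pi (fun i : Fin d => Set.finite_Icc (-(k : ℤ)) (k : ℤ)))
  intro v hv i _
  have := hv i
  constructor <;> omega

lemma pf_subset_box {d : ℕ} {S : Set (Fin d → ℤ)} (hS : S.Finite) :
    ∃ k : ℕ, ∀ v ∈ S, ∀ i, (v i).natAbs ≤ k := by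
  classical
  refine ⟨hS.toFinset.sup (fun v => Finset.univ.sup fun i => (v i).natAbs), ?_⟩
  intro v hv i
  calc (v i).natAbs ≤ Finset.univ.sup fun i => (v i).natAbs :=
        Finset.le_sup (f := fun i => (v i).natAbs) (Finset.mem_univ i)
    _ ≤ _ := Finset.le_sup (f := fun v : Fin d → ℤ => Finset.univ.sup fun i => (v i).natAbs)
        (hS.mem_toFinset.mpr hv)

/-- A walk along an infinite path `γ` from index `i` to index `i + k`. -/
def pf_segWalk {d : ℕ} (γ : ℕ → (Fin d → ℤ))
    (hγ : ∀ n, (latticeGraph d).Adj (γ n) (γ (n + 1))) (i : ℕ) :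
    (k : ℕ) → (latticeGraph d).Walk (γ i) (γ (i + k))
  | 0 => Walk.nil
  | (k + 1) => (pf_segWalk γ hγ i k).concat (hγ (i + k))

lemma pf_segWalk_support {d : ℕ} (γ : ℕ → (Fin d → ℤ))
    (hγ : ∀ n, (latticeGraph d).Adj (γ n) (γ (n + 1))) (i : ℕ) :
    ∀ k, ∀ x ∈ (pf_segWalk γ hγ i k).support, ∃ j, i ≤ j ∧ j ≤ i + k ∧ x = γ j := by
  intro k
  induction k with
  | zero =>
    intro x hx
    simp only [pf_segWalk, Walk.support_nil, List.mem_singleton] at hx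
    exact ⟨i, le_refl i, by omega, hx⟩
  | succ k ih =>
    intro x hx
    simp only [pf_segWalk, Walk.support_concat, List.concat_eq_append,
      List.mem_append, List.mem_singleton] at hx
    rcases hx with hx | hx
    · obtain ⟨j, h1, h2, h3⟩ := ih x hx
      exact ⟨j, h1, by omega, h3⟩
    · exact ⟨i + k + 1, by omega, by omega, hx⟩

/-- Concatenation of an infinite family of closed walks at `b`. -/
def pf_iterWalk {V : Type*} {G : SimpleGraph V} {b : V} (u : ℕ → G.Walk b b) :
    ℕ → G.Walk b b
  | 0 => Walk.nil
  | (j + 1) => (pf_iterWalk u j).append (u j)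

lemma pf_iterWalk_length_ge {V : Type*} {G : SimpleGraph V} {b : V}
    (u : ℕ → G.Walk b b) (hu : ∀ j, 1 ≤ (u j).length) :
    ∀ j, j ≤ (pf_iterWalk u j).length := by
  intro j
  induction j with
  | zero => exact Nat.zero_le _
  | succ j ih =>
    have := hu j
    simp only [pf_iterWalk, Walk.length_append]
    omega

lemma pf_iterWalk_length_mono {V : Type*} {G : SimpleGraph V} {b : V}
    (u : ℕ → G.Walk b b) {j j' : ℕ} (h : j ≤ j') :
    (pf_iterWalk u j).length ≤ (pf_iterWalk u j').length := by
  induction j' with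
  | zero =>
    have hj : j = 0 := Nat.le_zero.mp h
    subst hj; exact le_refl _
  | succ j' ih =>
    rcases Nat.lt_or_ge j (j' + 1) with h' | h'
    · have := ih (by omega)
      simp only [pf_iterWalk, Walk.length_append]
      omega
    · have : j = j' + 1 := by omega
      subst this; rfl

lemma pf_iterWalk_getVert_stable {V : Type*} {G : SimpleGraph V} {b : V}
    (u : ℕ → G.Walk b b) (j i : ℕ) (hi : i ≤ (pf_iterWalk u j).length) :
    (pf_iterWalk u (j + 1)).getVert i = (pf_iterWalk u j).getVert i := by
  simp only [pf_iterWalk, Walk.getVert_append]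
  rcases Nat.lt_or_ge i (pf_iterWalk u j).length with h | h
  · simp [h]
  · have h' : i = (pf_iterWalk u j).length := by omega
    subst h'
    simp [Walk.getVert_length, Walk.getVert_zero]

lemma pf_iterWalk_getVert_mono {V : Type*} {G : SimpleGraph V} {b : V}
    (u : ℕ → G.Walk b b) {j j' : ℕ} (h : j ≤ j') (i : ℕ)
    (hi : i ≤ (pf_iterWalk u j).length) :
    (pf_iterWalk u j').getVert i = (pf_iterWalk u j).getVert i := by
  induction j' with
  | zero =>
    have : j = 0 := by omega
    subst this; rfl
  | succ j' ih =>
    rcases Nat.lt_or_ge j (j' + 1) with h' | h'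
    · have h2 := ih (by omega)
      rw [pf_iterWalk_getVert_stable u j' i
        (le_trans hi (pf_iterWalk_length_mono u (by omega))), h2]
    · have : j = j' + 1 := by omega
      subst this; rfl

lemma pf_iterWalk_support {V : Type*} {G : SimpleGraph V} {b : V}
    (u : ℕ → G.Walk b b) (P : V → Prop) (hPb : P b)
    (hP : ∀ j, ∀ x ∈ (u j).support, P x) :
    ∀ j, ∀ x ∈ (pf_iterWalk u j).support, P x := by
  intro j
  induction j with
  | zero =>
    intro x hx
    simp only [pf_iterWalk, Walk.support_nil, List.mem_singleton] at hx
    rwa [hx]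
  | succ j ih =>
    intro x hx
    rw [pf_iterWalk, Walk.mem_support_append_iff] at hx
    rcases hx with hx | hx
    · exact ih x hx
    · exact hP j x hx

lemma pf_iterWalk_getVert_add {V : Type*} {G : SimpleGraph V} {b : V}
    (u : ℕ → G.Walk b b) (j i : ℕ) :
    (pf_iterWalk u (j + 1)).getVert ((pf_iterWalk u j).length + i) =
      (u j).getVert i := by
  simp only [pf_iterWalk, Walk.getVert_append]
  have : ¬ ((pf_iterWalk u j).length + i < (pf_iterWalk u j).length) := by omega
  simp [this]

/-- if `B` is a finite connected subgraph of `ℤ^d` all of whose edges are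
open and its open cluster `C` is finite, then every exterior boundary edge of `C` is
closed, and the exterior boundary edges cut `B` from infinity: every infinite path
starting in `B` and leaving every finite set uses an exterior boundary edge of `C`. -/
theorem exterior_boundary_is_closed_cutset (d : ℕ)
    (ω : Sym2 (Fin d → ℤ) → Prop) (B : Set (Fin d → ℤ))
    (hBfin : B.Finite)
    (hBconn : ∀ x ∈ B, ∀ y ∈ B, ∃ p : (latticeGraph d).Walk x y,
      (∀ z ∈ p.support, z ∈ B) ∧ ∀ e ∈ p.edges, ω e)
    (hBopen : ∀ u ∈ B, ∀ v ∈ B, (latticeGraph d).Adj u v → ω s(u, v))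
    (hCfin : (openCluster d ω B).Finite) :
    (∀ e ∈ extBoundaryEdges d (openCluster d ω B), ¬ ω e) ∧
    (∀ γ : ℕ → (Fin d → ℤ), γ 0 ∈ B →
      (∀ n, (latticeGraph d).Adj (γ n) (γ (n + 1))) →
      (∀ S : Set (Fin d → ℤ), S.Finite → ∃ n, γ n ∉ S) →
      ∃ n, s(γ n, γ (n + 1)) ∈ extBoundaryEdges d (openCluster d ω B)) := by
  classical
  set C := openCluster d ω B with hC
  have hBC : B ⊆ C := by
    intro b hb
    exact ⟨b, hb, Walk.nil, by simp⟩
  constructor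
  · -- every exterior boundary edge is closed
    rintro e ⟨a, b, rfl, hadj, haC, hbC, -⟩ hω
    obtain ⟨b₀, hb₀, p, hp⟩ := haC
    refine hbC ⟨b₀, hb₀, p.concat hadj, ?_⟩
    intro e he
    rw [Walk.edges_concat, List.concat_eq_append, List.mem_append,
      List.mem_singleton] at he
    rcases he with he | he
    · exact hp e he
    · rwa [he]
  · -- cutset part
    intro γ hγ0 hadjγ hesc
    have h0C : γ 0 ∈ C := hBC hγ0
    -- Claim A: for every finite S there is an exit step whose outer endpoint
    -- reaches outside S avoiding C.
    have claimA : ∀ S : Set (Fin d → ℤ), S.Finite →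
        ∃ n, ∃ v, γ n ∈ C ∧ γ (n + 1) ∉ C ∧ v ∉ S ∧
          ∃ w : (latticeGraph d).Walk (γ (n + 1)) v, ∀ x ∈ w.support, x ∉ C := by
      intro S hS
      obtain ⟨n₀, hn₀⟩ := hesc (S ∪ C) (hS.union hCfin)
      have hn₀S : γ n₀ ∉ S := fun h => hn₀ (Or.inl h)
      have hn₀C : γ n₀ ∉ C := fun h => hn₀ (Or.inr h)
      set P : ℕ → Prop := fun m => γ m ∈ C with hP
      set m := Nat.findGreatest P n₀ with hm
      have hmP : P m := Nat.findGreatest_spec (Nat.zero_le n₀) h0C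
      have hmle : m ≤ n₀ := Nat.findGreatest_le n₀
      have hmlt : m < n₀ := by
        rcases Nat.lt_or_ge m n₀ with h | h
        · exact h
        · exfalso; apply hn₀C
          have : m = n₀ := by omega
          rwa [this] at hmP
      have hafter : ∀ j, m < j → j ≤ n₀ → γ j ∉ C := by
        intro j h1 h2
        exact Nat.findGreatest_is_greatest h1 h2
      have hkey : m + 1 + (n₀ - (m + 1)) = n₀ := by omega
      refine ⟨m, γ n₀, hmP, hafter (m + 1) (by omega) (by omega), hn₀S, ?_⟩
      refine ⟨(pf_segWalk γ hadjγ (m + 1) (n₀ - (m + 1))).copy rfl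
        (congrArg γ hkey), ?_⟩
      intro x hx
      rw [Walk.support_copy] at hx
      obtain ⟨j, h1, h2, h3⟩ := pf_segWalk_support γ hadjγ (m + 1) _ x hx
      subst h3
      exact hafter j (by omega) (by omega)
    -- choose data for each box
    have claimA' : ∀ k : ℕ,
        ∃ n, ∃ v, γ n ∈ C ∧ γ (n + 1) ∉ C ∧
          (¬ ∀ i, (v i).natAbs ≤ k) ∧
          ∃ w : (latticeGraph d).Walk (γ (n + 1)) v, ∀ x ∈ w.support, x ∉ C := by
      intro k
      obtain ⟨n, v, h1, h2, h3, h4⟩ := claimA _ (pf_box_finite k)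
      exact ⟨n, v, h1, h2, h3, h4⟩
    choose nf vf hnf1 hnf2 hvf wf hwf using claimA'
    -- pigeonhole: some outer endpoint occurs infinitely often
    have hNfin : (⋃ a ∈ C, {v | (latticeGraph d).Adj a v}).Finite :=
      Set.Finite.biUnion hCfin (fun a _ => pf_nbr_finite a)
    haveI : Finite ↥(⋃ a ∈ C, {v | (latticeGraph d).Adj a v}) := hNfin.to_subtype
    have hmem : ∀ k, γ (nf k + 1) ∈ ⋃ a ∈ C, {v | (latticeGraph d).Adj a v} := by
      intro k
      exact Set.mem_biUnion (hnf1 k) (hadjγ (nf k))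
    obtain ⟨y, hy⟩ := Finite.exists_infinite_fiber
      (fun k : ℕ => (⟨γ (nf k + 1), hmem k⟩ :
        ↥(⋃ a ∈ C, {v | (latticeGraph d).Adj a v})))
    have hyinf : {k : ℕ | γ (nf k + 1) = (y : Fin d → ℤ)}.Infinite := by
      have hpre : ((fun k : ℕ => (⟨γ (nf k + 1), hmem k⟩ :
          ↥(⋃ a ∈ C, {v | (latticeGraph d).Adj a v}))) ⁻¹' {y}).Infinite :=
        Set.infinite_coe_iff.mp hy
      refine hpre.mono ?_
      intro k hk
      simp only [Set.mem_preimage, Set.mem_singleton_iff] at hk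
      exact congrArg Subtype.val hk
    obtain ⟨k₁, hk₁⟩ := hyinf.nonempty
    set b : Fin d → ℤ := γ (nf k₁ + 1) with hb
    have hbval : b = (y : Fin d → ℤ) := hk₁
    have hbC : b ∉ C := hnf2 k₁
    -- b reaches outside every box, avoiding C
    have hreach : ∀ k : ℕ, ∃ v, (¬ ∀ i, (v i).natAbs ≤ k) ∧ v ≠ b ∧
        ∃ w : (latticeGraph d).Walk b v, ∀ x ∈ w.support, x ∉ C := by
      intro k
      obtain ⟨kb, hkb⟩ := pf_subset_box (Set.finite_singleton b)
      obtain ⟨k', hk'mem, hk'⟩ := hyinf.exists_gt (max k kb)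
      have hbeq : γ (nf k' + 1) = b := by
        rw [hbval]; exact hk'mem
      refine ⟨vf k', ?_, ?_, (wf k').copy hbeq rfl, ?_⟩
      · intro h
        exact hvf k' (fun i => le_trans (h i) (by omega))
      · intro h
        apply hvf k'
        intro i
        rw [h]
        exact le_trans (hkb b rfl i) (by omega)
      · intro x hx
        rw [Walk.support_copy] at hx
        exact hwf k' x hx
    -- build the walks out-and-back
    choose tv htv htvne tw htw using hreach
    have htwlen : ∀ k, 1 ≤ (tw k).length := by
      intro k
      by_contra h
      have h0 : (tw k).length = 0 := by omega
      exact htvne k (Walk.eq_of_length_eq_zero h0).symm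
    set u : ℕ → (latticeGraph d).Walk b b :=
      fun k => ((tw k).append (tw k).reverse) with hu
    have hulen : ∀ k, 1 ≤ (u k).length := by
      intro k
      have h := htwlen k
      show 1 ≤ ((tw k).append (tw k).reverse).length
      rw [Walk.length_append, Walk.length_reverse]
      omega
    have husup : ∀ k, ∀ x ∈ (u k).support, x ∉ C := by
      intro k x hx
      rw [hu, Walk.mem_support_append_iff] at hx
      rcases hx with hx | hx
      · exact htw k x hx
      · rw [Walk.support_reverse, List.mem_reverse] at hx
        exact htw k x hx
    set W : ℕ → (latticeGraph d).Walk b b := pf_iterWalk u with hW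
    have hWlen : ∀ j, j ≤ (W j).length := pf_iterWalk_length_ge u hulen
    set δ : ℕ → (Fin d → ℤ) := fun n => (W (n + 1)).getVert n with hδ
    have hδ0 : δ 0 = b := Walk.getVert_zero _
    have hδeq : ∀ n j, n + 1 ≤ j → δ n = (W j).getVert n := by
      intro n j hj
      rw [hδ]
      exact (pf_iterWalk_getVert_mono u hj n (le_trans (by omega) (hWlen (n+1)))).symm
    have hδadj : ∀ n, (latticeGraph d).Adj (δ n) (δ (n + 1)) := by
      intro n
      have h1 : δ n = (W (n + 2)).getVert n := hδeq n (n + 2) (by omega)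
      have h2 : δ (n + 1) = (W (n + 2)).getVert (n + 1) := rfl
      rw [h1, h2]
      exact Walk.adj_getVert_succ _ (lt_of_lt_of_le (by omega) (hWlen (n + 2)))
    have hδC : ∀ n, δ n ∉ C := by
      intro n
      exact pf_iterWalk_support u (fun x => x ∉ C) hbC husup (n + 1) _
        (pf_getVert_mem_support _ n)
    have hδesc : ∀ S : Set (Fin d → ℤ), S.Finite → ∃ n, δ n ∉ S := by
      intro S hS
      obtain ⟨k₀, hk₀⟩ := pf_subset_box hS
      -- position of the far point tv k₀ inside W (k₀ + 1)
      set m : ℕ := (W k₀).length + (tw k₀).length with hmdef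
      have hval : (W (k₀ + 1)).getVert m = tv k₀ := by
        rw [hmdef]
        rw [show (W (k₀ + 1)) = pf_iterWalk u (k₀ + 1) from rfl,
          show (W k₀) = pf_iterWalk u k₀ from rfl]
        rw [pf_iterWalk_getVert_add u k₀ ((tw k₀).length)]
        rw [hu]
        simp only [Walk.getVert_append]
        have : ¬ ((tw k₀).length < (tw k₀).length) := by omega
        simp [this, Walk.getVert_zero]
      have hmle : m ≤ (W (k₀ + 1)).length := by
        have : (W (k₀ + 1)).length = (W k₀).length + (u k₀).length := by
          rw [hW]; simp [pf_iterWalk, Walk.length_append]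
        have h2 : (u k₀).length = 2 * (tw k₀).length := by
          rw [hu]; simp [Walk.length_append, Walk.length_reverse]; omega
        omega
      have hk₀m : k₀ + 1 ≤ m + 1 := by
        have := hWlen k₀
        have := htwlen k₀
        omega
      have : δ m = tv k₀ := by
        show (pf_iterWalk u (m + 1)).getVert m = tv k₀
        rw [pf_iterWalk_getVert_mono u hk₀m m hmle]
        exact hval
      refine ⟨m, ?_⟩
      rw [this]
      intro hmem
      exact htv k₀ (fun i => hk₀ _ hmem i)
    exact ⟨nf k₁, γ (nf k₁), b, rfl, hadjγ (nf k₁), hnf1 k₁, hbC,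
      δ, hδ0, hδadj, hδesc, hδC⟩
end

section
/- Let W and W' be F_0–F_m cutsets in the adjacent boxes B = [0,k_1]×∏_{i=2}^{d−1}[0,k_i]×[0,m] and B' = [k_1+1, 2k_1+1]×∏_{i=2}^{d−1}[0,k_i]×[0,m], respectively. Suppose the exits of the upper tunnels of W on the hyperplane {x_1 = k_1} and of W' on {x_1 = k_1+1} correspond exactly under the shift by one unit in the first coordinate, and likewise for the exits of the lower tunnels. Then W ∪ W' is a cutset separating the bottom face from the top face of the union box B ∪ B' = [0, 2k_1+1]×∏_{i=2}^{d−1}[0,k_i]×[0,m]. -/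
/-- Vertices of the lattice `ℤ^d` with `d = n + 1`, written as a pair of the first
`n` coordinates `(x_1, …, x_{d-1})` and the last (vertical) coordinate `x_d`. -/
abbrev LV (n : ℕ) : Type := (Fin n → ℤ) × ℤ

/-- The nearest-neighbor graph on `ℤ^{n+1}`. -/
def pGraph (n : ℕ) : SimpleGraph (LV n) where
  Adj p q := (∑ i, (p.1 i - q.1 i).natAbs) + (p.2 - q.2).natAbs = 1
  symm := by
    constructor
    intro p q h
    rw [Finset.sum_congr rfl (fun i _ => by rw [← Int.natAbs_neg, neg_sub] :
      ∀ i ∈ Finset.univ, (q.1 i - p.1 i).natAbs = (p.1 i - q.1 i).natAbs),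
      show (q.2 - p.2).natAbs = (p.2 - q.2).natAbs by rw [← Int.natAbs_neg, neg_sub]]
    exact h
  loopless := by constructor; intro p h; simp at h

/-- The box `B(k, m) = ∏_{i=1}^{d-1} [0, k_i] × [0, m]`. -/
def latBox (n : ℕ) (k : Fin n → ℕ) (m : ℕ) : Set (LV n) :=
  {p | (∀ i, 0 ≤ p.1 i ∧ p.1 i ≤ (k i : ℤ)) ∧ 0 ≤ p.2 ∧ p.2 ≤ (m : ℤ)}

/-- The bottom face `F_0` of the box `B(k, m)` (last coordinate `0`). -/
def bottomFace (n : ℕ) (k : Fin n → ℕ) (m : ℕ) : Set (LV n) :=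
  {p | p ∈ latBox n k m ∧ p.2 = 0}

/-- The top face `F_m` of the box `B(k, m)` (last coordinate `m`). -/
def topFace (n : ℕ) (k : Fin n → ℕ) (m : ℕ) : Set (LV n) :=
  {p | p ∈ latBox n k m ∧ p.2 = (m : ℤ)}

/-- `W` is an `F_0`–`F_m` cutset of the box `B(k, m)`: every lattice walk inside the
box from the bottom face to the top face uses an edge of `W`. -/
def IsBoxCutset (n : ℕ) (k : Fin n → ℕ) (m : ℕ) (W : Set (Sym2 (LV n))) : Prop :=
  ∀ u ∈ bottomFace n k m, ∀ v ∈ topFace n k m, ∀ p : (pGraph n).Walk u v,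
    (∀ x ∈ p.support, x ∈ latBox n k m) → ∃ e ∈ p.edges, e ∈ W

/-- `W` is a cutset of the vertex set `S` separating the faces `F0` and `Fm`:
every walk inside `S` from `F0` to `Fm` uses an edge of `W`. -/
def IsSetCutset (n : ℕ) (S F0 Fm : Set (LV n)) (W : Set (Sym2 (LV n))) : Prop :=
  ∀ u ∈ F0, ∀ v ∈ Fm, ∀ p : (pGraph n).Walk u v,
    (∀ x ∈ p.support, x ∈ S) → ∃ e ∈ p.edges, e ∈ W

/-- The face of the vertex set `S` at vertical level `c`. -/
def faceAt (n : ℕ) (S : Set (LV n)) (c : ℤ) : Set (LV n) := {p ∈ S | p.2 = c}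

/-- The set of exits of upper tunnels of the cutset `W` of the box `S` (with top face
at level `m`) on the hyperplane `{x_1 = c}` (the first coordinate being `i0`):
vertices of `S` on the hyperplane joined to the top face by a walk in `S` avoiding
every edge of `W`. -/
def upperExits (n : ℕ) (i0 : Fin n) (S : Set (LV n)) (m : ℕ)
    (W : Set (Sym2 (LV n))) (c : ℤ) : Set (LV n) :=
  {v | v ∈ S ∧ v.1 i0 = c ∧ ∃ w ∈ faceAt n S (m : ℤ), ∃ p : (pGraph n).Walk v w,
    (∀ x ∈ p.support, x ∈ S) ∧ ∀ e ∈ p.edges, e ∉ W}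

/-- The set of exits of lower tunnels of the cutset `W` of the box `S` on the
hyperplane `{x_1 = c}`: vertices of `S` on the hyperplane joined to the bottom face
by a walk in `S` avoiding every edge of `W`. -/
def lowerExits (n : ℕ) (i0 : Fin n) (S : Set (LV n))
    (W : Set (Sym2 (LV n))) (c : ℤ) : Set (LV n) :=
  {v | v ∈ S ∧ v.1 i0 = c ∧ ∃ w ∈ faceAt n S 0, ∃ p : (pGraph n).Walk v w,
    (∀ x ∈ p.support, x ∈ S) ∧ ∀ e ∈ p.edges, e ∉ W}

/-- The shift by one unit in the first coordinate `i0`. -/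
def shiftOne (n : ℕ) (i0 : Fin n) (p : LV n) : LV n :=
  (fun i => if i = i0 then p.1 i + 1 else p.1 i, p.2)

/-- The adjacent box `B' = [k_1 + 1, 2k_1 + 1] × ∏_{i=2}^{d-1} [0, k_i] × [0, m]`. -/
def latBox' (n : ℕ) (i0 : Fin n) (k : Fin n → ℕ) (m : ℕ) : Set (LV n) :=
  {p | ((k i0 : ℤ) + 1 ≤ p.1 i0 ∧ p.1 i0 ≤ 2 * (k i0 : ℤ) + 1) ∧
    (∀ i, i ≠ i0 → 0 ≤ p.1 i ∧ p.1 i ≤ (k i : ℤ)) ∧ 0 ≤ p.2 ∧ p.2 ≤ (m : ℤ)}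

/-- The union box `B ∪ B' = [0, 2k_1 + 1] × ∏_{i=2}^{d-1} [0, k_i] × [0, m]`. -/
def latBoxUnion (n : ℕ) (i0 : Fin n) (k : Fin n → ℕ) (m : ℕ) : Set (LV n) :=
  {p | (0 ≤ p.1 i0 ∧ p.1 i0 ≤ 2 * (k i0 : ℤ) + 1) ∧
    (∀ i, i ≠ i0 → 0 ≤ p.1 i ∧ p.1 i ≤ (k i : ℤ)) ∧ 0 ≤ p.2 ∧ p.2 ≤ (m : ℤ)}

/-- Auxiliary: `x` is joined to the bottom face of `S` by a walk inside `S`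
avoiding the edges of `W`. -/
def LowPred (n : ℕ) (S : Set (LV n)) (W : Set (Sym2 (LV n))) (x : LV n) : Prop :=
  ∃ w ∈ faceAt n S 0, ∃ q : (pGraph n).Walk x w,
    (∀ y ∈ q.support, y ∈ S) ∧ ∀ e ∈ q.edges, e ∉ W

lemma shiftOne_injective (n : ℕ) (i0 : Fin n) : Function.Injective (shiftOne n i0) := by
  intro p q h
  have h1 := congrArg Prod.fst h
  have h2 := congrArg Prod.snd h
  refine Prod.ext ?_ h2
  funext i
  have hi := congrFun h1 i
  by_cases hii : i = i0
  · simp only [shiftOne, if_pos hii] at hi; omega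
  · simp only [shiftOne, if_neg hii] at hi; exact hi

lemma adj_cross (n : ℕ) (i0 : Fin n) {p q : LV n} (h : (pGraph n).Adj p q)
    (hlt : p.1 i0 < q.1 i0) : q = shiftOne n i0 p := by
  have h' : (∑ i, (p.1 i - q.1 i).natAbs) + (p.2 - q.2).natAbs = 1 := h
  have ha : 1 ≤ (p.1 i0 - q.1 i0).natAbs := by
    have : p.1 i0 - q.1 i0 ≠ 0 := by omega
    exact Int.natAbs_pos.mpr this
  have hle : (p.1 i0 - q.1 i0).natAbs ≤ ∑ i, (p.1 i - q.1 i).natAbs :=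
    Finset.single_le_sum (f := fun i => (p.1 i - q.1 i).natAbs)
      (fun i _ => Nat.zero_le _) (Finset.mem_univ i0)
  have hsum1 : (∑ i, (p.1 i - q.1 i).natAbs) = (p.1 i0 - q.1 i0).natAbs := by omega
  have hvert : (p.2 - q.2).natAbs = 0 := by omega
  have ha1 : (p.1 i0 - q.1 i0).natAbs = 1 := by omega
  have hrest : ∑ i ∈ Finset.univ.erase i0, (p.1 i - q.1 i).natAbs = 0 := by
    have h2 : (p.1 i0 - q.1 i0).natAbs + ∑ i ∈ Finset.univ.erase i0, (p.1 i - q.1 i).natAbs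
        = ∑ i, (p.1 i - q.1 i).natAbs :=
      Finset.add_sum_erase Finset.univ (fun i => (p.1 i - q.1 i).natAbs) (Finset.mem_univ i0)
    omega
  have hq2 : q.2 = p.2 := by omega
  have hothers : ∀ i, i ≠ i0 → p.1 i = q.1 i := by
    intro i hi
    have := (Finset.sum_eq_zero_iff.mp hrest) i (Finset.mem_erase.mpr ⟨hi, Finset.mem_univ i⟩)
    omega
  refine Prod.ext ?_ hq2
  funext i
  by_cases hii : i = i0
  · rw [hii]
    have hs : (shiftOne n i0 p).1 i0 = p.1 i0 + 1 := by simp [shiftOne]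
    rw [hs]; omega
  · have hs : (shiftOne n i0 p).1 i = p.1 i := by simp [shiftOne, hii]
    rw [hs]; exact (hothers i hii).symm

/-- patching cutsets, Lemma 16: let `W` and `W'` be `F_0`–`F_m`
cutsets of the adjacent boxes `B = [0,k_1] × ∏ [0,k_i] × [0,m]` and
`B' = [k_1+1, 2k_1+1] × ∏ [0,k_i] × [0,m]`.  If the exits of the upper tunnels of
`W` on `{x_1 = k_1}` correspond exactly, under the shift by one unit in the first
coordinate, to the exits of the upper tunnels of `W'` on `{x_1 = k_1 + 1}`, and
likewise for the exits of the lower tunnels, then `W ∪ W'` is a cutset separating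
the bottom face from the top face of the union box `B ∪ B'`. -/
theorem patching_cutsets (n : ℕ) (hn : 0 < n) (k : Fin n → ℕ) (m : ℕ)
    (W W' : Set (Sym2 (LV n)))
    (hW : IsSetCutset n (latBox n k m)
      (faceAt n (latBox n k m) 0) (faceAt n (latBox n k m) (m : ℤ)) W)
    (hW' : IsSetCutset n (latBox' n ⟨0, hn⟩ k m)
      (faceAt n (latBox' n ⟨0, hn⟩ k m) 0) (faceAt n (latBox' n ⟨0, hn⟩ k m) (m : ℤ)) W')
    (hupper : shiftOne n ⟨0, hn⟩ '' upperExits n ⟨0, hn⟩ (latBox n k m) m W (k ⟨0, hn⟩ : ℤ)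
      = upperExits n ⟨0, hn⟩ (latBox' n ⟨0, hn⟩ k m) m W' ((k ⟨0, hn⟩ : ℤ) + 1))
    (hlower : shiftOne n ⟨0, hn⟩ '' lowerExits n ⟨0, hn⟩ (latBox n k m) W (k ⟨0, hn⟩ : ℤ)
      = lowerExits n ⟨0, hn⟩ (latBox' n ⟨0, hn⟩ k m) W' ((k ⟨0, hn⟩ : ℤ) + 1)) :
    IsSetCutset n (latBoxUnion n ⟨0, hn⟩ k m)
      (faceAt n (latBoxUnion n ⟨0, hn⟩ k m) 0)
      (faceAt n (latBoxUnion n ⟨0, hn⟩ k m) (m : ℤ)) (W ∪ W') := by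
  set i0 : Fin n := ⟨0, hn⟩ with hi0
  set B := latBox n k m with hB
  set B' := latBox' n i0 k m with hB'
  set U := latBoxUnion n i0 k m with hU
  -- basic membership facts
  have memB : ∀ x : LV n, x ∈ U → x.1 i0 ≤ (k i0 : ℤ) → x ∈ B := by
    intro x hx hle
    refine ⟨fun i => ?_, hx.2.2⟩
    by_cases hii : i = i0
    · subst hii; exact ⟨hx.1.1, hle⟩
    · exact hx.2.1 i hii
  have memB' : ∀ x : LV n, x ∈ U → (k i0 : ℤ) + 1 ≤ x.1 i0 → x ∈ B' := by
    intro x hx hge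
    exact ⟨⟨hge, hx.1.2⟩, hx.2.1, hx.2.2⟩
  have disj : ∀ x : LV n, x ∈ B → x ∈ B' → False := by
    intro x hxB hxB'
    have h1 := (hxB.1 i0).2
    have h2 := hxB'.1.1
    omega
  -- the "low" predicate
  set Low : LV n → Prop := fun x => LowPred n B W x ∨ LowPred n B' W' x with hLow
  -- the main step lemma
  have hstep : ∀ u v : LV n, u ∈ U → v ∈ U → (pGraph n).Adj u v →
      s(u, v) ∉ W ∪ W' → Low u → Low v := by
    intro u v hu hv hadj he hLu
    by_cases hcu : u.1 i0 ≤ (k i0 : ℤ) <;> by_cases hcv : v.1 i0 ≤ (k i0 : ℤ)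
    · -- both in B
      have huB := memB u hu hcu
      have hvB := memB v hv hcv
      rcases hLu with ⟨w, hw, q, hqs, hqe⟩ | ⟨w, hw, q, hqs, hqe⟩
      swap
      · exact absurd (hqs u q.start_mem_support) (fun h => disj u huB h)
      refine Or.inl ⟨w, hw, SimpleGraph.Walk.cons hadj.symm q, ?_, ?_⟩
      · intro y hy
        rw [SimpleGraph.Walk.support_cons] at hy
        rcases List.mem_cons.mp hy with h | h
        · subst h; exact hvB
        · exact hqs y h
      · intro e hee
        rw [SimpleGraph.Walk.edges_cons] at hee
        rcases List.mem_cons.mp hee with h | h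
        · subst h
          intro hW1
          exact he (Or.inl (by rwa [Sym2.eq_swap] at hW1))
        · exact hqe e h
    · -- u in B, v in B' : crossing B → B'
      push_neg at hcv
      have hlt : u.1 i0 < v.1 i0 := lt_of_le_of_lt hcu hcv
      have hshift := adj_cross n i0 hadj hlt
      have hv1 : v.1 i0 = u.1 i0 + 1 := by rw [hshift]; simp [shiftOne]
      have hu1 : u.1 i0 = (k i0 : ℤ) := by omega
      have huB := memB u hu hcu
      rcases hLu with ⟨w, hw, q, hqs, hqe⟩ | ⟨w, hw, q, hqs, hqe⟩
      swap
      · exact absurd (hqs u q.start_mem_support) (fun h => disj u huB h)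
      have hue : u ∈ lowerExits n i0 B W (k i0 : ℤ) := ⟨huB, hu1, w, hw, q, hqs, hqe⟩
      have : v ∈ lowerExits n i0 B' W' ((k i0 : ℤ) + 1) := by
        rw [← hlower]
        exact ⟨u, hue, hshift.symm⟩
      exact Or.inr this.2.2
    · -- u in B', v in B : crossing B' → B
      push_neg at hcu
      have hlt : v.1 i0 < u.1 i0 := lt_of_le_of_lt hcv hcu
      have hshift := adj_cross n i0 hadj.symm hlt
      have hu1 : u.1 i0 = v.1 i0 + 1 := by rw [hshift]; simp [shiftOne]
      have hv1 : v.1 i0 = (k i0 : ℤ) := by omega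
      have huB' := memB' u hu (by omega)
      rcases hLu with ⟨w, hw, q, hqs, hqe⟩ | ⟨w, hw, q, hqs, hqe⟩
      · exact absurd (hqs u q.start_mem_support) (fun h => disj u h huB')
      have hue : u ∈ lowerExits n i0 B' W' ((k i0 : ℤ) + 1) :=
        ⟨huB', by omega, w, hw, q, hqs, hqe⟩
      rw [← hlower] at hue
      obtain ⟨z, hz, hzeq⟩ := hue
      have : z = v := shiftOne_injective n i0 (by rw [hzeq, hshift])
      subst this
      exact Or.inl hz.2.2
    · -- both in B'
      push_neg at hcu hcv
      have huB' := memB' u hu (by omega)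
      have hvB' := memB' v hv (by omega)
      rcases hLu with ⟨w, hw, q, hqs, hqe⟩ | ⟨w, hw, q, hqs, hqe⟩
      · exact absurd (hqs u q.start_mem_support) (fun h => disj u h huB')
      refine Or.inr ⟨w, hw, SimpleGraph.Walk.cons hadj.symm q, ?_, ?_⟩
      · intro y hy
        rw [SimpleGraph.Walk.support_cons] at hy
        rcases List.mem_cons.mp hy with h | h
        · subst h; exact hvB'
        · exact hqs y h
      · intro e hee
        rw [SimpleGraph.Walk.edges_cons] at hee
        rcases List.mem_cons.mp hee with h | h
        · subst h
          intro hW1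
          exact he (Or.inr (by rwa [Sym2.eq_swap] at hW1))
        · exact hqe e h
  -- now the main argument
  intro u hu v hv p hp
  by_contra hcon
  push_neg at hcon
  -- every vertex along the walk is Low
  have key : ∀ (a b : LV n) (q : (pGraph n).Walk a b), (∀ x ∈ q.support, x ∈ U) →
      (∀ e ∈ q.edges, e ∉ W ∪ W') → Low a → Low b := by
    intro a b q
    induction q with
    | nil => intro _ _ h; exact h
    | @cons a c b hadj q ih =>
      intro hsup hav hLa
      have haU : a ∈ U := hsup a (by rw [SimpleGraph.Walk.support_cons]; exact List.mem_cons_self)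
      have hcU : c ∈ U := hsup c (by
        rw [SimpleGraph.Walk.support_cons]
        exact List.mem_cons_of_mem _ q.start_mem_support)
      have hLc : Low c := hstep a c haU hcU hadj
        (hav _ (by rw [SimpleGraph.Walk.edges_cons]; exact List.mem_cons_self)) hLa
      exact ih (fun x hx => hsup x (by
          rw [SimpleGraph.Walk.support_cons]; exact List.mem_cons_of_mem _ hx))
        (fun e hee => hav e (by
          rw [SimpleGraph.Walk.edges_cons]; exact List.mem_cons_of_mem _ hee)) hLc
  -- the start vertex is Low
  have hLu : Low u := by
    have huU : u ∈ U := hu.1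
    have hu2 : u.2 = 0 := hu.2
    by_cases hcu : u.1 i0 ≤ (k i0 : ℤ)
    · exact Or.inl ⟨u, ⟨memB u huU hcu, hu2⟩, SimpleGraph.Walk.nil,
        by intro y hy; simp at hy; rw [hy]; exact memB u huU hcu,
        by intro e hee; simp at hee⟩
    · push_neg at hcu
      exact Or.inr ⟨u, ⟨memB' u huU (by omega), hu2⟩, SimpleGraph.Walk.nil,
        by intro y hy; simp at hy; rw [hy]; exact memB' u huU (by omega),
        by intro e hee; simp at hee⟩
  have hLv : Low v := key u v p hp hcon hLu
  -- contradiction: v is on the top face but is connected to the bottom avoiding the cutset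
  rcases hLv with ⟨w, hw, q, hqs, hqe⟩ | ⟨w, hw, q, hqs, hqe⟩
  · have hvB : v ∈ B := hqs v q.start_mem_support
    obtain ⟨e, hee, heW⟩ := hW w hw v ⟨hvB, hv.2⟩ q.reverse (by
      intro x hx
      rw [SimpleGraph.Walk.support_reverse] at hx
      exact hqs x (List.mem_reverse.mp hx))
    rw [SimpleGraph.Walk.edges_reverse] at hee
    exact hqe e (List.mem_reverse.mp hee) heW
  · have hvB' : v ∈ B' := hqs v q.start_mem_support
    obtain ⟨e, hee, heW⟩ := hW' w hw v ⟨hvB', hv.2⟩ q.reverse (by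
      intro x hx
      rw [SimpleGraph.Walk.support_reverse] at hx
      exact hqs x (List.mem_reverse.mp hx))
    rw [SimpleGraph.Walk.edges_reverse] at hee
    exact hqe e (List.mem_reverse.mp hee) heW
end
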